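/- Let D = a h_b h_bᴴ - b h_e h_eᴴ be a Hermitian matrix on ℂⁿ with a, b > 0 and h_b, h_e linearly independent. Then the largest eigenvalue of D equals (α + √(α² + 4ab g_b g_e (1-ρ̄)))/2, where α = a g_b - b g_e, g_b = ‖h_b‖², g_e = ‖h_e‖², ρ̄ = |⟨h_e,h_b⟩|²/(g_b g_e), and this eigenvalue is strictly positive. -/

import Mathlib

open scoped InnerProductSpace

lemma vmv_mulVec {n : ℕ} (v u : EuclideanSpace ℂ (Fin n)) :
    (Matrix.vecMulVec v (star v)).mulVec u = ⟪v, u⟫_ℂ • (v : Fin n → ℂ) := by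
  funext i
  simp only [Matrix.mulVec, dotProduct, Matrix.vecMulVec_apply, PiLp.inner_apply,
    RCLike.inner_apply, PiLp.smul_apply, Pi.smul_apply, smul_eq_mul, Pi.star_apply]
  rw [Finset.sum_mul]
  congr 1; funext j; rw [RCLike.star_def]; ring

lemma aux_inner {n : ℕ} (hb he u : EuclideanSpace ℂ (Fin n)) (a b : ℝ) :
    ⟪u, (WithLp.toLp 2 (((a : ℂ) • Matrix.vecMulVec hb (star hb)
        - (b : ℂ) • Matrix.vecMulVec he (star he)).mulVec u) : EuclideanSpace ℂ (Fin n))⟫_ℂ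
      = ((a * ‖⟪hb, u⟫_ℂ‖^2 - b * ‖⟪he, u⟫_ℂ‖^2 : ℝ) : ℂ) := by
  have h : (WithLp.toLp 2 (((a : ℂ) • Matrix.vecMulVec hb (star hb)
        - (b : ℂ) • Matrix.vecMulVec he (star he)).mulVec u) : EuclideanSpace ℂ (Fin n))
      = ((a : ℂ) * ⟪hb, u⟫_ℂ) • hb - ((b : ℂ) * ⟪he, u⟫_ℂ) • he := by
    rw [Matrix.sub_mulVec, Matrix.smul_mulVec, Matrix.smul_mulVec,
      vmv_mulVec, vmv_mulVec]
    ext i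
    simp [mul_smul]
  rw [h, inner_sub_right, inner_smul_right, inner_smul_right, ← inner_conj_symm u hb,
    ← inner_conj_symm u he]
  push_cast
  rw [show ((a:ℂ) * ⟪hb,u⟫_ℂ) * (starRingEnd ℂ) ⟪hb,u⟫_ℂ
       = (a:ℂ) * (⟪hb,u⟫_ℂ * (starRingEnd ℂ) ⟪hb,u⟫_ℂ) from by ring,
     show ((b:ℂ) * ⟪he,u⟫_ℂ) * (starRingEnd ℂ) ⟪he,u⟫_ℂ
       = (b:ℂ) * (⟪he,u⟫_ℂ * (starRingEnd ℂ) ⟪he,u⟫_ℂ) from by ring,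
     Complex.mul_conj', Complex.mul_conj']

lemma inner_comb1 {n : ℕ} (v1 v2 : EuclideanSpace ℂ (Fin n)) (x y : ℂ) :
    ⟪v1, x • v1 + y • v2⟫_ℂ = x * ((‖v1‖^2 : ℝ) : ℂ) + y * (starRingEnd ℂ) ⟪v2, v1⟫_ℂ := by
  rw [inner_add_right, inner_smul_right, inner_smul_right, inner_self_eq_norm_sq_to_K,
    ← inner_conj_symm v1 v2]
  push_cast
  rfl

lemma inner_comb2 {n : ℕ} (v1 v2 : EuclideanSpace ℂ (Fin n)) (x y : ℂ) :
    ⟪v2, x • v1 + y • v2⟫_ℂ = x * ⟪v2, v1⟫_ℂ + y * ((‖v2‖^2 : ℝ) : ℂ) := by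
  rw [inner_add_right, inner_smul_right, inner_smul_right, inner_self_eq_norm_sq_to_K]
  push_cast
  rfl

set_option maxHeartbeats 2000000 in
theorem stmt_16 (n : ℕ) (hn : 2 ≤ n)
    (hb he : EuclideanSpace ℂ (Fin n))
    (hli : LinearIndependent ℂ ![hb, he])
    (a b : ℝ) (ha : 0 < a) (hbpos : 0 < b) :
    let gb := ‖hb‖^2
    let ge := ‖he‖^2
    let ρbar := ‖(⟪he, hb⟫_ℂ : ℂ)‖^2 / (gb * ge)
    let α := a*gb - b*ge
    let D : Matrix (Fin n) (Fin n) ℂ :=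
      (a : ℂ) • Matrix.vecMulVec hb (star hb) - (b : ℂ) • Matrix.vecMulVec he (star he)
    IsGreatest
      {r : ℝ | ∃ u : EuclideanSpace ℂ (Fin n), ‖u‖ = 1 ∧
        (r : ℂ) = ⟪u, (WithLp.toLp 2 (D.mulVec u) : EuclideanSpace ℂ (Fin n))⟫_ℂ}
      ((α + Real.sqrt (α^2 + 4*a*b*gb*ge*(1-ρbar)))/2) ∧
    0 < (α + Real.sqrt (α^2 + 4*a*b*gb*ge*(1-ρbar)))/2 := by
  intro gb ge ρbar α D
  have hgbd : gb = ‖hb‖^2 := rfl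
  have hged : ge = ‖he‖^2 := rfl
  have hαd : α = a*gb - b*ge := rfl
  have hDd : D = (a : ℂ) • Matrix.vecMulVec hb (star hb)
      - (b : ℂ) • Matrix.vecMulVec he (star he) := rfl
  have hρd : ρbar = ‖(⟪he, hb⟫_ℂ : ℂ)‖^2 / (gb * ge) := rfl
  clear_value gb ge ρbar α D
  rw [hDd]
  -- linear independence facts
  have hli2 : he ≠ 0 ∧ ∀ z : ℂ, z • he ≠ hb := by
    have := linearIndependent_fin2.mp hli
    simpa using this
  have hhe : he ≠ 0 := hli2.1
  have hhb : hb ≠ 0 := by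
    intro h
    exact hli2.2 0 (by simp [h])
  have hgb : 0 < gb := by rw [hgbd]; exact pow_pos (norm_pos_iff.mpr hhb) 2
  have hge : 0 < ge := by rw [hged]; exact pow_pos (norm_pos_iff.mpr hhe) 2
  set c : ℂ := ⟪he, hb⟫_ℂ with hc_def
  set K : ℝ := ‖c‖^2 with hK_def
  clear_value c K
  have hcc : c * (starRingEnd ℂ) c = ((K : ℝ) : ℂ) := by
    rw [Complex.mul_conj', hK_def]; push_cast; ring
  have hK0 : 0 ≤ K := by rw [hK_def]; positivity
  -- strict Cauchy-Schwarz
  have hKlt : K < gb * ge := by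
    have h1 : ‖c‖ ≤ ‖he‖ * ‖hb‖ := by
      rw [hc_def]; exact norm_inner_le_norm (𝕜 := ℂ) he hb
    have h2 : ‖c‖ ≠ ‖he‖ * ‖hb‖ := by
      intro h
      rw [hc_def] at h
      obtain ⟨r, hr0, hr⟩ := (norm_inner_eq_norm_iff hhe hhb).mp h
      exact hli2.2 r hr.symm
    rw [hgbd, hged, hK_def]
    nlinarith [norm_nonneg c, lt_of_le_of_ne h1 h2, norm_nonneg hb, norm_nonneg he]
  have hd : 0 < gb * ge - K := by linarith
  -- rewrite the discriminant
  have hrho : α^2 + 4*a*b*gb*ge*(1-ρbar) = α^2 + 4*a*b*(gb*ge - K) := by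
    rw [hρd]
    field_simp
  rw [hrho]
  set s : ℝ := Real.sqrt (α^2 + 4*a*b*(gb*ge - K)) with hs_def
  set lam : ℝ := (α + s)/2 with hlam_def
  clear_value s lam
  have hdisc : 0 < α^2 + 4*a*b*(gb*ge - K) := by nlinarith [sq_nonneg α, mul_pos (mul_pos ha hbpos) hd]
  have hsq : s^2 = α^2 + 4*a*b*(gb*ge - K) := by
    rw [hs_def]; exact Real.sq_sqrt hdisc.le
  have habs : |α| < s := by
    rw [hs_def, ← Real.sqrt_sq_eq_abs]
    apply Real.sqrt_lt_sqrt (sq_nonneg α)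
    nlinarith [mul_pos (mul_pos ha hbpos) hd]
  have hlam_pos : 0 < lam := by
    rw [hlam_def]
    nlinarith [le_abs_self α, neg_abs_le α]
  have hαlam : α < lam := by
    rw [hlam_def]
    nlinarith [le_abs_self α]
  have hchar : lam^2 = (a*gb - b*ge)*lam + a*b*(gb*ge - K) := by
    rw [hlam_def, ← hαd]
    linear_combination hsq/4
  refine ⟨⟨?_, ?_⟩, hlam_pos⟩
  · -- membership: explicit eigenvector
    set P : ℝ := lam + b*ge with hP_def
    clear_value P
    have hP : 0 < P := by
      rw [hP_def]; nlinarith [mul_pos hbpos hge]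
    have hPC : ((P:ℝ):ℂ) ≠ 0 := Complex.ofReal_ne_zero.mpr hP.ne'
    set v : EuclideanSpace ℂ (Fin n) := ((P:ℝ):ℂ) • hb + (-(b:ℂ)*c) • he with hv_def
    clear_value v
    have hvne : v ≠ 0 := by
      intro h0
      apply hli2.2 (((b:ℂ)*c)/((P:ℝ):ℂ))
      have h1 : ((P:ℝ):ℂ) • hb = ((b:ℂ)*c) • he := by
        have h2 : ((P:ℝ):ℂ) • hb + (-(b:ℂ)*c) • he = 0 := by rw [← hv_def, h0]
        have h3 : (-(b:ℂ)*c) • he = -(((b:ℂ)*c) • he) := by rw [neg_mul, neg_smul]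
        rw [h3, add_neg_eq_zero] at h2
        exact h2
      calc ((b:ℂ)*c/((P:ℝ):ℂ)) • he = ((P:ℝ):ℂ)⁻¹ • (((b:ℂ)*c) • he) := by
            rw [smul_smul]; ring_nf
        _ = ((P:ℝ):ℂ)⁻¹ • (((P:ℝ):ℂ) • hb) := by rw [← h1]
        _ = hb := inv_smul_smul₀ hPC hb
    have hbv : ⟪hb, v⟫_ℂ = ((P*gb - b*K : ℝ) : ℂ) := by
      rw [hv_def, inner_comb1, ← hc_def, ← hgbd]
      push_cast
      linear_combination (-(b:ℂ))*hcc
    have hev : ⟪he, v⟫_ℂ = ((lam:ℝ):ℂ) * c := by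
      rw [hv_def, inner_comb2, ← hc_def, ← hged, hP_def]
      push_cast
      ring
    have hvv : (‖v‖^2 : ℝ) = P*(P*gb - b*K) - b*lam*K := by
      have h1 : ⟪v, v⟫_ℂ = ((P*(P*gb-b*K) - b*lam*K : ℝ) : ℂ) := by
        nth_rewrite 1 [hv_def]
        rw [inner_add_left, inner_smul_left, inner_smul_left, hbv, hev,
          Complex.conj_ofReal]
        rw [map_mul, map_neg, Complex.conj_ofReal]
        push_cast
        linear_combination (-(b:ℂ)*(lam:ℂ))*hcc
      have h2 : ⟪v, v⟫_ℂ = ((‖v‖^2 : ℝ):ℂ) := by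
        rw [inner_self_eq_norm_sq_to_K]; push_cast; rfl
      exact Complex.ofReal_inj.mp (h2.symm.trans h1)
    have hvpos : 0 < ‖v‖ := norm_pos_iff.mpr hvne
    have hv2pos : 0 < P*(P*gb - b*K) - b*lam*K := by
      rw [← hvv]; exact pow_pos hvpos 2
    refine ⟨((‖v‖⁻¹ : ℝ):ℂ) • v, ?_, ?_⟩
    · rw [norm_smul, Complex.norm_real, Real.norm_eq_abs,
        abs_of_nonneg (inv_nonneg.mpr hvpos.le)]
      exact inv_mul_cancel₀ hvpos.ne'
    · rw [aux_inner]
      rw [inner_smul_right, inner_smul_right, hbv, hev]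
      have hkey : a*(P*gb-b*K)^2 - b*(lam^2*K) = lam * (P*(P*gb-b*K) - b*lam*K) := by
        rw [hP_def]
        linear_combination (-((lam+b*ge)*gb - b*K)) * hchar
      have n1 : ‖((‖v‖⁻¹ : ℝ):ℂ) * ((P*gb - b*K : ℝ):ℂ)‖^2
          = (‖v‖^2)⁻¹ * (P*gb-b*K)^2 := by
        rw [norm_mul, Complex.norm_real, Complex.norm_real, Real.norm_eq_abs,
          Real.norm_eq_abs, mul_pow, sq_abs, sq_abs, inv_pow]
      have n2 : ‖((‖v‖⁻¹ : ℝ):ℂ) * (((lam:ℝ):ℂ) * c)‖^2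
          = (‖v‖^2)⁻¹ * (lam^2 * K) := by
        rw [norm_mul, norm_mul, Complex.norm_real, Complex.norm_real, Real.norm_eq_abs,
          Real.norm_eq_abs, mul_pow, mul_pow, sq_abs, sq_abs, inv_pow, ← hK_def]
      rw [n1, n2]
      have final : lam = a * ((‖v‖^2)⁻¹ * (P*gb-b*K)^2) - b * ((‖v‖^2)⁻¹ * (lam^2*K)) := by
        rw [hvv, mul_left_comm a, mul_left_comm b, ← mul_sub, hkey, mul_comm lam, ← mul_assoc,
          inv_mul_cancel₀ hv2pos.ne', one_mul]
      exact Complex.ofReal_inj.mpr final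
  · -- upper bound
    rintro r ⟨u, hu, hru⟩
    rw [aux_inner] at hru
    have hr : r = a*‖⟪hb,u⟫_ℂ‖^2 - b*‖⟪he,u⟫_ℂ‖^2 := Complex.ofReal_inj.mp hru
    set S : ℂ := ⟪hb,u⟫_ℂ with hS_def
    set T : ℂ := ⟪he,u⟫_ℂ with hT_def
    clear_value S T
    set X : ℝ := ‖S‖ with hX_def
    set Y : ℝ := ‖T‖ with hY_def
    clear_value X Y
    have hX0 : 0 ≤ X := hX_def ▸ norm_nonneg S
    have hY0 : 0 ≤ Y := hY_def ▸ norm_nonneg T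
    have hdC : ((gb*ge - K : ℝ):ℂ) ≠ 0 := Complex.ofReal_ne_zero.mpr hd.ne'
    set x : ℂ := (((ge:ℝ):ℂ) * S - (starRingEnd ℂ) c * T) / ((gb*ge - K : ℝ):ℂ) with hx_def
    set y : ℂ := (((gb:ℝ):ℂ) * T - c * S) / ((gb*ge - K : ℝ):ℂ) with hy_def
    clear_value x y
    set p : EuclideanSpace ℂ (Fin n) := x • hb + y • he with hp_def
    clear_value p
    have hbp : ⟪hb, p⟫_ℂ = S := by
      rw [hp_def, inner_comb1, ← hc_def, ← hgbd, hx_def, hy_def,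
        div_mul_eq_mul_div, div_mul_eq_mul_div, ← add_div, div_eq_iff hdC]
      push_cast
      linear_combination (-S)*hcc
    have hep : ⟪he, p⟫_ℂ = T := by
      rw [hp_def, inner_comb2, ← hc_def, ← hged, hx_def, hy_def,
        div_mul_eq_mul_div, div_mul_eq_mul_div, ← add_div, div_eq_iff hdC]
      push_cast
      linear_combination (-T)*hcc
    have hpu : ⟪p, u⟫_ℂ = (starRingEnd ℂ) x * S + (starRingEnd ℂ) y * T := by
      rw [hp_def, inner_add_left, inner_smul_left, inner_smul_left, ← hS_def, ← hT_def]
    have hpp : ⟪p, p⟫_ℂ = (starRingEnd ℂ) x * S + (starRingEnd ℂ) y * T := by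
      nth_rewrite 1 [hp_def]
      rw [inner_add_left, inner_smul_left, inner_smul_left, hbp, hep]
    have hnp : ((‖p‖^2 : ℝ):ℂ) = (starRingEnd ℂ) x * S + (starRingEnd ℂ) y * T := by
      rw [← hpp, inner_self_eq_norm_sq_to_K]; push_cast; rfl
    have hp1 : ‖p‖^2 ≤ 1 := by
      have h1 : ‖⟪p,u⟫_ℂ‖ ≤ ‖p‖ * ‖u‖ := norm_inner_le_norm p u
      rw [hu, mul_one] at h1
      have h2 : ‖⟪p,u⟫_ℂ‖ = ‖p‖^2 := by
        rw [hpu, ← hnp, Complex.norm_real, Real.norm_eq_abs, abs_of_nonneg (sq_nonneg _)]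
      rw [h2] at h1
      nlinarith [norm_nonneg p]
    set W : ℝ := (c * S * (starRingEnd ℂ) T).re with hW_def
    have hWc : c * S * (starRingEnd ℂ) T + (starRingEnd ℂ) c * (starRingEnd ℂ) S * T
        = 2*((W : ℝ):ℂ) := by
      have h0 := Complex.add_conj (c * S * (starRingEnd ℂ) T)
      rw [map_mul, map_mul, Complex.conj_conj] at h0
      push_cast at h0
      exact h0
    have hSS : (starRingEnd ℂ) S * S = ((X:ℝ):ℂ)^2 := by
      rw [hX_def, mul_comm, Complex.mul_conj']
    have hTT : (starRingEnd ℂ) T * T = ((Y:ℝ):ℂ)^2 := by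
      rw [hY_def, mul_comm, Complex.mul_conj']
    have hEc : ((‖p‖^2 * (gb*ge - K) : ℝ):ℂ) = ((ge*X^2 + gb*Y^2 - 2*W : ℝ):ℂ) := by
      calc ((‖p‖^2 * (gb*ge - K) : ℝ):ℂ)
          = ((‖p‖^2:ℝ):ℂ) * ((gb*ge - K : ℝ):ℂ) := by push_cast; ring
        _ = ((starRingEnd ℂ) x * S + (starRingEnd ℂ) y * T) * ((gb*ge - K:ℝ):ℂ) := by
            rw [hnp]
        _ = ((ge*X^2 + gb*Y^2 - 2*W : ℝ):ℂ) := by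
            rw [hx_def, hy_def]
            simp only [map_div₀, map_sub, map_mul, Complex.conj_conj, Complex.conj_ofReal]
            rw [div_mul_eq_mul_div, div_mul_eq_mul_div, ← add_div,
              div_mul_cancel₀ _ hdC]
            push_cast
            linear_combination ((ge:ℝ):ℂ)*hSS + ((gb:ℝ):ℂ)*hTT - hWc
    have hE : ge*X^2 + gb*Y^2 - 2*W ≤ gb*ge - K := by
      have he1 : ‖p‖^2 * (gb*ge - K) = ge*X^2 + gb*Y^2 - 2*W := Complex.ofReal_inj.mp hEc
      nlinarith [hd, hp1]
    have hWle : W ≤ ‖c‖*X*Y := by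
      rw [hW_def, hX_def, hY_def]
      calc (c*S*(starRingEnd ℂ) T).re ≤ ‖c*S*(starRingEnd ℂ) T‖ :=
            Complex.re_le_norm _
        _ = ‖c‖*‖S‖*‖T‖ := by
            rw [norm_mul, norm_mul, Complex.norm_conj]
    rw [hαd] at hαlam
    have h2' : 0 < lam*ge - a*K + b*ge^2 := by
      nlinarith [mul_lt_mul_of_pos_right hαlam hge, mul_pos ha hd]
    have key1 : (lam*ge - a*(gb*ge - K))*(lam*ge - a*K + b*ge^2) = a^2*(gb*ge-K)*K := by
      linear_combination ge^2*hchar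
    have hA : 0 ≤ lam*ge - a*(gb*ge - K) := by
      by_contra hcon
      push_neg at hcon
      nlinarith [key1, h2', mul_nonneg (mul_nonneg (sq_nonneg a) hd.le) hK0]
    have hAC : (lam*ge - a*(gb*ge-K))*(lam*gb + b*(gb*ge-K)) = lam^2*K := by
      linear_combination (gb*ge-K)*hchar
    have hC : 0 < lam*gb + b*(gb*ge-K) := by
      nlinarith [mul_pos hlam_pos hgb, mul_pos hbpos hd]
    have hKnorm : K = ‖c‖^2 := hK_def
    have e0 : (lam*gb + b*(gb*ge-K)) * ((lam*ge - a*(gb*ge-K))*X^2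
          + (lam*gb + b*(gb*ge-K))*Y^2 - 2*lam*‖c‖*X*Y)
        = (lam*‖c‖*X - (lam*gb + b*(gb*ge-K))*Y)^2 := by
      linear_combination X^2*hAC + lam^2*X^2*hKnorm
    have h1 : 0 ≤ (lam*ge - a*(gb*ge-K))*X^2 + (lam*gb + b*(gb*ge-K))*Y^2
        - 2*lam*‖c‖*X*Y := by
      have hsq' : 0 ≤ (lam*gb + b*(gb*ge-K)) * ((lam*ge - a*(gb*ge-K))*X^2
          + (lam*gb + b*(gb*ge-K))*Y^2 - 2*lam*‖c‖*X*Y) := by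
        rw [e0]; exact sq_nonneg _
      exact (mul_nonneg_iff_of_pos_left hC).mp hsq' 
    have hprod : 0 ≤ (gb*ge - K)*(lam - (a*X^2 - b*Y^2)) := by
      linarith [mul_le_mul_of_nonneg_left hE hlam_pos.le, h1,
        mul_le_mul_of_nonneg_left hWle (by positivity : (0:ℝ) ≤ 2*lam)]
    rw [hr]
    exact sub_nonneg.mp ((mul_nonneg_iff_of_pos_left hd).mp hprod)
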